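/- Let k be a field, h a finite-dimensional Lie algebra over k, and M a finite-dimensional Lie module over h with action (x,u) ↦ x·u. Let φ : h × M → h be bilinear and a 1-cocycle: [x, φ(y,u)] + φ(x, y·u) − [y, φ(x,u)] − φ(y, x·u) − φ([x,y], u) = 0 for all x,y ∈ h, u ∈ M. Define δφ(x)(u₁,u₂) = φ(x,u₁)·u₂ − φ(x,u₂)·u₁ ∈ M. Then δφ is a closed 1-cochain with values in Λ²M*⊗M: for all x,y ∈ h and u₁,u₂ ∈ M, [x·(δφ(y)(u₁,u₂)) − δφ(y)(x·u₁,u₂) − δφ(y)(u₁,x·u₂)] − [y·(δφ(x)(u₁,u₂)) − δφ(x)(y·u₁,u₂) − δφ(x)(u₁,y·u₂)] − δφ([x,y])(u₁,u₂) = 0. -/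
import Mathlib


/-- If `φ : h × M → h` is a bilinear 1-cocycle, then
`δφ(x)(u₁,u₂) = φ(x,u₁)·u₂ − φ(x,u₂)·u₁` is a closed 1-cochain with values in `Λ²M*⊗M`. -/
theorem delta_phi_is_closed
    {k : Type*} [Field k] {h : Type*} [LieRing h] [LieAlgebra k h]
    [FiniteDimensional k h]
    {M : Type*} [AddCommGroup M] [Module k M] [LieRingModule h M] [LieModule k h M]
    [FiniteDimensional k M]
    (φ : h →ₗ[k] M →ₗ[k] h)
    (hcocycle : ∀ (x y : h) (u : M),
      ⁅x, φ y u⁆ + φ x ⁅y, u⁆ - ⁅y, φ x u⁆ - φ y ⁅x, u⁆ - φ ⁅x, y⁆ u = 0)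
    (δφ : h → M → M → M)
    (hδφ : ∀ (x : h) (u₁ u₂ : M), δφ x u₁ u₂ = ⁅φ x u₁, u₂⁆ - ⁅φ x u₂, u₁⁆) :
    ∀ (x y : h) (u₁ u₂ : M),
      (⁅x, δφ y u₁ u₂⁆ - δφ y ⁅x, u₁⁆ u₂ - δφ y u₁ ⁅x, u₂⁆)
        - (⁅y, δφ x u₁ u₂⁆ - δφ x ⁅y, u₁⁆ u₂ - δφ x u₁ ⁅y, u₂⁆)
        - δφ ⁅x, y⁆ u₁ u₂ = 0 := by
  intro x y u₁ u₂
  have hc1 : φ ⁅x, y⁆ u₁ = ⁅x, φ y u₁⁆ + φ x ⁅y, u₁⁆ - ⁅y, φ x u₁⁆ - φ y ⁅x, u₁⁆ :=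
    (sub_eq_zero.mp (hcocycle x y u₁)).symm
  have hc2 : φ ⁅x, y⁆ u₂ = ⁅x, φ y u₂⁆ + φ x ⁅y, u₂⁆ - ⁅y, φ x u₂⁆ - φ y ⁅x, u₂⁆ :=
    (sub_eq_zero.mp (hcocycle x y u₂)).symm
  simp only [hδφ, hc1, hc2, lie_sub, sub_lie, add_lie, lie_lie]
  abel
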